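/- arXiv:1509.08787 — 2 statements merged into one kernel-verified Lean document; each statement's English description precedes it below -/
import Mathlib

section
/- (Factorization under independence, d = 2 case) Suppose the tempered density factorizes: π_t(x₁,x₂) = π_t(x₁)π_t(x₂) with π_t(x_i) = π₀(x_i)L_i(x_i)^{λ(t)}/Z_i(t), and choose g₁(x₁,t) = F_t(x₁) = ∫_{−∞}^{x₁} π_t(u₁) du₁. Then the velocity field of the Knothe–Rosenblatt-type flow reduces to f_i(x,t) = λ'(t)( ∫_{−∞}^{x_i} (I_t^{(i)} − log L_i(u_i)) π_t(u_i) du_i ) / π_t(x_i) for i = 1, 2, where I_t^{(i)} = ∫ log L_i(u)π_t(u) du; i.e., each component depends only on x_i and solves the corresponding one-dimensional flow transport problem. -/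
open MeasureTheory Set

/-- Factorization under independence (`d = 2`): when the tempered density
factorizes as `π_t(x₁,x₂) = π_t(x₁)π_t(x₂)` and `g₁ = F_t`, the
Knothe–Rosenblatt-type velocity field reduces componentwise to the
one-dimensional velocity fields
`f_i(x,t) = λ'(t)(∫_{−∞}^{x_i} (I_t^{(i)} − log L_i(u)) π_t(u) du)/π_t(x_i)`. -/
theorem kr_flow_factorizes_d2 (p dp : Fin 2 → ℝ → ℝ → ℝ) (L : Fin 2 → ℝ → ℝ)
    (lam' : ℝ → ℝ) (I : Fin 2 → ℝ → ℝ)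
    (hppos : ∀ i t u, 0 < p i t u)
    (hLpos : ∀ i u, 0 < L i u)
    (hprob : ∀ i t, ∫ u, p i t u = 1)
    (hpint : ∀ i t, Integrable (p i t))
    (hlogint : ∀ i t, Integrable (fun u => Real.log (L i u) * p i t u))
    (hdpint : ∀ i t, Integrable (dp i t))
    (hI : ∀ i t, I i t = ∫ u, Real.log (L i u) * p i t u)
    (hdp : ∀ i t u, dp i t u = lam' t * (Real.log (L i u) - I i t) * p i t u)
    (F : ℝ → ℝ → ℝ)
    (hF : ∀ t x₁, F t x₁ = ∫ u in Iic x₁, p 0 t u) :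
    ∀ (t x₁ x₂ : ℝ),
      (-((∫ u in Iic x₁, (dp 0 t u * p 1 t x₂ + p 0 t u * dp 1 t x₂))
            - F t x₁ * (∫ u, (dp 0 t u * p 1 t x₂ + p 0 t u * dp 1 t x₂)))
          / (p 0 t x₁ * p 1 t x₂)
        = lam' t * (∫ u in Iic x₁, (I 0 t - Real.log (L 0 u)) * p 0 t u) / p 0 t x₁)
      ∧
      (-(p 0 t x₁ *
            (∫ u₂ in Iic x₂, ∫ u₁ : ℝ, (dp 0 t u₁ * p 1 t u₂ + p 0 t u₁ * dp 1 t u₂)))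
          / (p 0 t x₁ * p 1 t x₂)
        = lam' t * (∫ u in Iic x₂, (I 1 t - Real.log (L 1 u)) * p 1 t u) / p 1 t x₂) := by

  intro t x₁ x₂
  have hzero : ∀ i t, (∫ u, dp i t u) = 0 := by
    intro i t
    have heq : (fun u => dp i t u) =
        fun u => lam' t * (Real.log (L i u) * p i t u) - (lam' t * I i t) * p i t u := by
      funext u; rw [hdp]; ring
    rw [heq, integral_sub ((hlogint i t).const_mul _) ((hpint i t).const_mul _),
      integral_const_mul, integral_const_mul, hprob, ← hI]
    ring
  have hIic : ∀ i t x, (∫ u in Iic x, dp i t u)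
      = -(lam' t * ∫ u in Iic x, (I i t - Real.log (L i u)) * p i t u) := by
    intro i t x
    have heq : (fun u => dp i t u) =
        fun u => lam' t * (-((I i t - Real.log (L i u)) * p i t u)) := by
      funext u; rw [hdp]; ring
    rw [heq, integral_const_mul, integral_neg]
    ring
  have h2 : (∀ x₂ : ℝ, (∫ u, (dp 0 t u * p 1 t x₂ + p 0 t u * dp 1 t x₂)) = dp 1 t x₂) := by
    intro y
    rw [integral_add ((hdpint 0 t).mul_const _) ((hpint 0 t).mul_const _),
      integral_mul_const, integral_mul_const, hzero, hprob]
    ring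
  constructor
  · have h1 : (∫ u in Iic x₁, (dp 0 t u * p 1 t x₂ + p 0 t u * dp 1 t x₂))
        = (∫ u in Iic x₁, dp 0 t u) * p 1 t x₂ + F t x₁ * dp 1 t x₂ := by
      rw [integral_add ((hdpint 0 t).integrableOn.mul_const _)
        ((hpint 0 t).integrableOn.mul_const _), integral_mul_const, integral_mul_const, hF]
    rw [h1, h2, hIic 0 t x₁]
    field_simp [(hppos 0 t x₁).ne', (hppos 1 t x₂).ne']
    ring
  · have h3 : (∫ u₂ in Iic x₂, ∫ u₁, (dp 0 t u₁ * p 1 t u₂ + p 0 t u₁ * dp 1 t u₂))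
        = ∫ u₂ in Iic x₂, dp 1 t u₂ := by
      simp only [h2]
    rw [h3, hIic 1 t x₂]
    field_simp [(hppos 0 t x₁).ne', (hppos 1 t x₂).ne']
end

section
/- (Truncated Gaussian Gibbs flow solves the conditional Liouville equation) With the truncated curve as above, the velocity field f̃_i(x,t) = ( α_i'(t) π₀(α_i(t), x_{−i}) ∫_{x_i}^{β_i(t)} π₀(u_i, x_{−i}) du_i + β_i'(t) π₀(β_i(t), x_{−i}) ∫_{α_i(t)}^{x_i} π₀(u_i, x_{−i}) du_i ) / ( π₀(x) ∫_{α_i(t)}^{β_i(t)} π₀(u_i, x_{−i}) du_i ) satisfies ∂_{x_i}( π_t(x_i|x_{−i}) f̃_i(x,t) ) = −∂_t π_t(x_i|x_{−i}) for all x in the interior of the support of π_t and t ∈ (0,1). -/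
open MeasureTheory Set

/-- The truncated-Gaussian Gibbs velocity field solves the conditional
Liouville equation `∂_{x_i}(π_t(x_i|x_{−i}) f̃_i(x,t)) = −∂ₜ π_t(x_i|x_{−i})`
in the interior of the support. -/
theorem truncated_gibbs_flow_conditional_liouville (d : ℕ) (π₀ : (Fin d → ℝ) → ℝ)
    (hπ₀pos : ∀ x, 0 < π₀ x) (hπ₀C1 : ContDiff ℝ 1 π₀)
    (α β : Fin d → ℝ → ℝ)
    (hα : ∀ i, Differentiable ℝ (α i)) (hβ : ∀ i, Differentiable ℝ (β i))
    (hαmono : ∀ i, Monotone (α i)) (hβmono : ∀ i, Antitone (β i))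
    (hαβ : ∀ i t, α i t < β i t)
    (f : Fin d → (Fin d → ℝ) → ℝ → ℝ)
    (hf : ∀ (i : Fin d) (x : Fin d → ℝ) (t : ℝ), f i x t =
      (deriv (α i) t * π₀ (Function.update x i (α i t)) *
          (∫ u in Ioo (x i) (β i t), π₀ (Function.update x i u))
        + deriv (β i) t * π₀ (Function.update x i (β i t)) *
          (∫ u in Ioo (α i t) (x i), π₀ (Function.update x i u)))
        / (π₀ x * ∫ u in Ioo (α i t) (β i t), π₀ (Function.update x i u))) :
    ∀ (i : Fin d) (x : Fin d → ℝ), ∀ t ∈ Ioo (0:ℝ) 1,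
      (∀ j, x j ∈ Ioo (α j t) (β j t)) →
      HasDerivAt
        (fun s =>
          (π₀ (Function.update x i s) /
              ∫ u in Ioo (α i t) (β i t), π₀ (Function.update x i u)) *
            f i (Function.update x i s) t)
        (-((deriv (α i) t *
              (π₀ (Function.update x i (α i t)) /
                ∫ u in Ioo (α i t) (β i t), π₀ (Function.update x i u))
            - deriv (β i) t *
              (π₀ (Function.update x i (β i t)) /
                ∫ u in Ioo (α i t) (β i t), π₀ (Function.update x i u))) *
            (π₀ x / ∫ u in Ioo (α i t) (β i t), π₀ (Function.update x i u))))
        (x i) := by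

  intro i x t _ hx
  set a := deriv (α i) t with ha
  set b := deriv (β i) t with hb
  set g : ℝ → ℝ := fun u => π₀ (Function.update x i u) with hg
  have hgcont : Continuous g := hπ₀C1.continuous.comp (continuous_const.update i continuous_id)
  have hgpos : ∀ u, 0 < g u := fun u => hπ₀pos _
  have hab : α i t < β i t := hαβ i t
  have hint : ∀ u v : ℝ, IntervalIntegrable g volume u v := fun u v =>
    hgcont.intervalIntegrable u v
  set Z : ℝ := ∫ u in Ioo (α i t) (β i t), g u with hZ
  have hZeq : Z = ∫ u in (α i t)..(β i t), g u := by
    rw [intervalIntegral.integral_of_le hab.le, MeasureTheory.integral_Ioc_eq_integral_Ioo]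
  have hZpos : 0 < Z := by
    rw [hZeq]
    exact intervalIntegral.intervalIntegral_pos_of_pos (hint _ _) hgpos hab
  have hZne : Z ≠ 0 := ne_of_gt hZpos
  -- rewrite the function
  have hfun : (fun s =>
      (π₀ (Function.update x i s) /
          ∫ u in Ioo (α i t) (β i t), π₀ (Function.update x i u)) *
        f i (Function.update x i s) t) =
      fun s => (a * g (α i t) * (∫ u in Ioo s (β i t), g u)
        + b * g (β i t) * (∫ u in Ioo (α i t) s, g u)) / (Z * Z) := by
    funext s
    rw [hf]
    simp only [Function.update_idem, Function.update_self]
    have hgs : g s ≠ 0 := ne_of_gt (hgpos s)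
    show (g s / Z) * ((a * g (α i t) * (∫ u in Ioo s (β i t), g u)
        + b * g (β i t) * (∫ u in Ioo (α i t) s, g u)) / (g s * Z)) = _
    field_simp
  rw [hfun]
  -- derivative of the two integral pieces near x i
  have hxi := hx i
  have hF : HasDerivAt (fun s => ∫ u in Ioo s (β i t), g u) (-g (x i)) (x i) := by
    have h1 : HasDerivAt (fun s => ∫ u in s..(β i t), g u) (-g (x i)) (x i) :=
      intervalIntegral.integral_hasDerivAt_left (hint _ _)
        (hgcont.stronglyMeasurableAtFilter _ _) hgcont.continuousAt
    refine h1.congr_of_eventuallyEq ?_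
    filter_upwards [Ioo_mem_nhds hxi.1 hxi.2] with s hs
    rw [intervalIntegral.integral_of_le hs.2.le, MeasureTheory.integral_Ioc_eq_integral_Ioo]
  have hG : HasDerivAt (fun s => ∫ u in Ioo (α i t) s, g u) (g (x i)) (x i) := by
    have h1 : HasDerivAt (fun s => ∫ u in (α i t)..s, g u) (g (x i)) (x i) :=
      intervalIntegral.integral_hasDerivAt_right (hint _ _)
        (hgcont.stronglyMeasurableAtFilter _ _) hgcont.continuousAt
    refine h1.congr_of_eventuallyEq ?_
    filter_upwards [Ioo_mem_nhds hxi.1 hxi.2] with s hs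
    rw [intervalIntegral.integral_of_le hs.1.le, MeasureTheory.integral_Ioc_eq_integral_Ioo]
  have hD : HasDerivAt (fun s => (a * g (α i t) * (∫ u in Ioo s (β i t), g u)
        + b * g (β i t) * (∫ u in Ioo (α i t) s, g u)) / (Z * Z))
      ((a * g (α i t) * (-g (x i)) + b * g (β i t) * (g (x i))) / (Z * Z)) (x i) :=
    ((hF.const_mul (a * g (α i t))).add (hG.const_mul (b * g (β i t)))).div_const _
  convert hD using 1
  have hxx : g (x i) = π₀ x := by rw [hg]; simp
  rw [← hxx]
  show -((a * (g (α i t) / Z) - b * (g (β i t) / Z)) * (g (x i) / Z)) = _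
  field_simp
  ring
end
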